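/- For every biconnected graph G and every vertex u of G, the minimum over layouts of G starting at u of the δ^ec-cost is at most etw(G)^2 + 2·etw(G). That is, etw(G,u) ≤ etw(G)^2 + 2·etw(G), where etw(G,u) = min{max_i δ^ec_{G,L}(i) : L ∈ L(G), L(1) = u}. -/

import Mathlib

open Classical

/-- A finite loopless multigraph: a finite vertex type, a finite edge type, and an
endpoint function assigning to every edge an unordered pair of distinct vertices. -/
structure FinMGraph where
  V : Type
  E : Type
  [fV : Fintype V]
  [fE : Fintype E]
  [dV : DecidableEq V]
  ends : E → Sym2 V
  loopless : ∀ e, ¬ (ends e).IsDiag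

attribute [instance] FinMGraph.fV FinMGraph.fE FinMGraph.dV

namespace FinMGraph

variable (G : FinMGraph)

/-- One-step adjacency inside the vertex set `S` (i.e. in the induced subgraph `G[S]`). -/
def stepIn (S : Set G.V) (a b : G.V) : Prop :=
  a ∈ S ∧ b ∈ S ∧ ∃ e : G.E, G.ends e = s(a, b)

/-- The vertex set of the connected component of `v` in the induced subgraph `G[S]`. -/
def comp (S : Set G.V) (v : G.V) : Set G.V :=
  {w | Relation.ReflTransGen (G.stepIn S) v w}

/-- The number of edges (counted with multiplicity) with exactly one endpoint in `X`. -/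
noncomputable def cut (X : Set G.V) : ℕ :=
  Nat.card {e : G.E // ∃ a b, G.ends e = s(a, b) ∧ a ∈ X ∧ b ∉ X}

/-- For a layout `L` (a linear ordering of the vertices) the set `S_i` of vertices
occurring at position `i` or later. -/
def tail (L : Fin (Fintype.card G.V) ≃ G.V) (i : Fin (Fintype.card G.V)) : Set G.V :=
  {v | i ≤ L.symm v}

/-- The cost `δ^ec(i) = |E_G(C_G(S_i, x_i))|` of position `i` in the layout `L`. -/
noncomputable def cost (L : Fin (Fintype.card G.V) ≃ G.V) (i : Fin (Fintype.card G.V)) : ℕ :=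
  G.cut (G.comp (G.tail L i) (L i))

/-- The edge-treewidth of `G`: the minimum over all layouts of the maximum cost. -/
noncomputable def etw : ℕ :=
  sInf {k | ∃ L : Fin (Fintype.card G.V) ≃ G.V, ∀ i, G.cost L i ≤ k}

end FinMGraph

namespace FinMGraph

variable (G : FinMGraph)

/-- `G` is a forest: every edge is a bridge, i.e. after removing an edge its two
endpoints are no longer connected. -/
def IsForest : Prop :=
  ∀ (e : G.E) (a b : G.V), G.ends e = s(a, b) →
    ¬ Relation.ReflTransGen (fun x y => ∃ f : G.E, f ≠ e ∧ G.ends f = s(x, y)) a b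

/-- A cycle of length `k` in `G`, given by an injective cyclic sequence of vertices and an
injective sequence of distinct edges joining consecutive vertices. -/
def IsCycleOn (k : ℕ) (v : ZMod k → G.V) (f : ZMod k → G.E) : Prop :=
  2 ≤ k ∧ Function.Injective v ∧ Function.Injective f ∧
    ∀ i : ZMod k, G.ends (f i) = s(v i, v (i + 1))

/-- `G` is a cactus: every edge belongs to at most one cycle, i.e. any two cycles
sharing an edge have the same edge set. -/
def IsCactus : Prop :=
  ∀ (k₁ : ℕ) (v₁ : ZMod k₁ → G.V) (f₁ : ZMod k₁ → G.E)
    (k₂ : ℕ) (v₂ : ZMod k₂ → G.V) (f₂ : ZMod k₂ → G.E),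
    G.IsCycleOn k₁ v₁ f₁ → G.IsCycleOn k₂ v₂ f₂ →
    (∃ e, e ∈ Set.range f₁ ∧ e ∈ Set.range f₂) → Set.range f₁ = Set.range f₂

/-- A walk from `a` to `b` using the listed edges, in order. -/
inductive Walk : G.V → G.V → List G.E → Prop
  | nil (v : G.V) : Walk v v []
  | cons {a b c : G.V} {e : G.E} {es : List G.E} :
      G.ends e = s(a, b) → Walk b c es → Walk a c (e :: es)

/-- `H` is a subgraph of `G`. -/
def IsSubgraphOf (H : FinMGraph) : Prop :=
  ∃ (φ : H.V ↪ G.V) (ψ : H.E ↪ G.E), ∀ e, G.ends (ψ e) = (H.ends e).map φ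

/-- The edge-degree of `v`: the number of incident edges, counted with multiplicity. -/
noncomputable def edeg (v : G.V) : ℕ :=
  Nat.card {e : G.E // v ∈ G.ends e}

/-- The vertex-degree of `v`: the number of distinct neighbours of `v`. -/
noncomputable def vdeg (v : G.V) : ℕ :=
  Nat.card {w : G.V // w ≠ v ∧ ∃ e : G.E, G.ends e = s(v, w)}

/-- `H` is obtained from `G` by contracting one edge `e = {x,y}` whose endpoints both
have vertex-degree two and edge-degree two. -/
def ContractStep (H : FinMGraph) : Prop :=
  ∃ (x y : G.V) (e : G.E), G.ends e = s(x, y) ∧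
    G.vdeg x = 2 ∧ G.edeg x = 2 ∧ G.vdeg y = 2 ∧ G.edeg y = 2 ∧
    ∃ (φ : G.V → H.V) (ψ : {f : G.E // f ≠ e} ≃ H.E),
      Function.Surjective φ ∧
      (∀ v w : G.V, φ v = φ w ↔ (v = w ∨ (v = x ∧ w = y) ∨ (v = y ∧ w = x))) ∧
      ∀ f : {f : G.E // f ≠ e}, H.ends (ψ f) = (G.ends f.1).map φ

/-- `H` is a weak topological minor of `G`: `H` is obtained from a subgraph of `G` by
repeatedly contracting edges whose endpoints have vertex-degree two and edge-degree two. -/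
def IsWeakTopMinorOf (H G : FinMGraph) : Prop :=
  ∃ S : FinMGraph, S.IsSubgraphOf G ∧ Relation.ReflTransGen FinMGraph.ContractStep S H

/-- The induced subgraph `G[S]` is connected. -/
def ConnectedOn (S : Set G.V) : Prop :=
  ∀ a ∈ S, ∀ b ∈ S, Relation.ReflTransGen (G.stepIn S) a b

/-- `G` is connected. -/
def Connected : Prop := G.ConnectedOn Set.univ

/-- `G` is biconnected: nonempty and removing any single vertex leaves it connected. -/
def Biconnected : Prop :=
  Nonempty G.V ∧ ∀ v : G.V, G.ConnectedOn {w | w ≠ v}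

/-- The minimum cost over layouts whose first vertex is `u`. -/
noncomputable def etwFrom (u : G.V) : ℕ :=
  sInf {k | ∃ L : Fin (Fintype.card G.V) ≃ G.V, (L.symm u : ℕ) = 0 ∧ ∀ i, G.cost L i ≤ k}

/-- The sub-multigraph of `G` on the same vertex set whose edges are those in `F`. -/
noncomputable def restrictE (F : Set G.E) : FinMGraph :=
  { V := G.V, E := {e : G.E // e ∈ F}, ends := fun e => G.ends e.1,
    loopless := fun e => G.loopless e.1 }

/-- Two edges lie in a common block: they are equal or some cycle contains both. -/
def SameBlock (e f : G.E) : Prop :=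
  e = f ∨ ∃ (k : ℕ) (v : ZMod k → G.V) (g : ZMod k → G.E),
    G.IsCycleOn k v g ∧ e ∈ Set.range g ∧ f ∈ Set.range g

/-- The block of `G` containing the edge `e`. -/
noncomputable def blockOf (e : G.E) : FinMGraph :=
  G.restrictE {f | G.SameBlock e f}

/-- The number of vertices outside `X` having a neighbour in `X`. -/
noncomputable def ncut (X : Set G.V) : ℕ :=
  Nat.card {v : G.V // v ∉ X ∧ ∃ x ∈ X, ∃ e : G.E, G.ends e = s(v, x)}

/-- Treewidth, via its layout characterization: the minimum over layouts of the
maximum of `|N_G(C_G(S_i, x_i))|`. -/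
noncomputable def twl : ℕ :=
  sInf {k | ∃ L : Fin (Fintype.card G.V) ≃ G.V,
    ∀ i, G.ncut (G.comp (G.tail L i) (L i)) ≤ k}

/-- The maximum edge-degree of `G`. -/
noncomputable def maxEdeg : ℕ :=
  sSup {m | ∃ v : G.V, m = G.edeg v}

end FinMGraph

/-- A tree-layout of `G`: a rooted tree (given by a parent function under which every
node eventually reaches the root) together with an injective mapping `τ` of the vertices
of `G` into the nodes such that the endpoints of every edge are mapped to comparable
(ancestor/descendant) nodes. -/
structure TreeLayout (G : FinMGraph) where
  T : Type
  par : T → T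
  root : T
  par_root : par root = root
  reaches_root : ∀ t : T, ∃ n : ℕ, par^[n] t = root
  τ : G.V → T
  inj : Function.Injective τ
  comparable : ∀ (e : G.E) (a b : G.V), G.ends e = s(a, b) →
    (∃ n : ℕ, par^[n] (τ a) = τ b) ∨ (∃ n : ℕ, par^[n] (τ b) = τ a)

/-- The set `X_T(u)` of vertices of `G` mapped to descendants of the node `u`. -/
def TreeLayout.region {G : FinMGraph} (TL : TreeLayout G) (u : TL.T) : Set G.V :=
  {x | ∃ n : ℕ, TL.par^[n] (TL.τ x) = u}

/-- The theta graph `θ k`: two vertices joined by `k` parallel edges. -/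
def theta (k : ℕ) : FinMGraph :=
  { V := Fin 2, E := Fin k, ends := fun _ => s((0 : Fin 2), 1),
    loopless := fun _ => by rw [Sym2.mk_isDiag_iff]; decide }

/-- The cycle on `n ≥ 2` vertices. -/
def cyc (n : ℕ) (h : 2 ≤ n) : FinMGraph :=
  letI : NeZero n := ⟨by omega⟩
  letI : Fact (1 < n) := ⟨h⟩
  { V := ZMod n, E := ZMod n, ends := fun i => s(i, i + 1),
    loopless := fun i => by
      rw [Sym2.mk_isDiag_iff]
      exact fun hh => one_ne_zero (left_eq_add.mp hh) }

/-- The multigraph `Z_n^3`, obtained from the cycle on `n ≥ 2` vertices by doubling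
every edge. -/
def Z3 (n : ℕ) (h : 2 ≤ n) : FinMGraph :=
  letI : NeZero n := ⟨by omega⟩
  letI : Fact (1 < n) := ⟨h⟩
  { V := ZMod n, E := ZMod n × Fin 2, ends := fun p => s(p.1, p.1 + 1),
    loopless := fun p => by
      rw [Sym2.mk_isDiag_iff]
      exact fun hh => one_ne_zero (left_eq_add.mp hh) }

section AuxLemmas

namespace FinMGraph

variable {G : FinMGraph}

lemma stepIn_symm {S : Set G.V} {a b : G.V} (h : G.stepIn S a b) : G.stepIn S b a := by
  obtain ⟨ha, hb, e, he⟩ := h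
  exact ⟨hb, ha, e, by rw [he, Sym2.eq_swap]⟩

lemma reach_symm {S : Set G.V} {a b : G.V}
    (h : Relation.ReflTransGen (G.stepIn S) a b) :
    Relation.ReflTransGen (G.stepIn S) b a :=
  haveI : Std.Symm (G.stepIn S) := ⟨fun _ _ => stepIn_symm⟩
  Relation.ReflTransGen.symmetric.symm _ _ h

lemma mem_comp_self (S : Set G.V) (v : G.V) : v ∈ G.comp S v := Relation.ReflTransGen.refl

lemma comp_subset {S : Set G.V} {v : G.V} (hv : v ∈ S) : G.comp S v ⊆ S := by
  intro w hw
  induction hw with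
  | refl => exact hv
  | tail _ h _ => exact h.2.1

lemma comp_eq_of_mem {S : Set G.V} {v w : G.V} (h : w ∈ G.comp S v) :
    G.comp S w = G.comp S v := by
  ext z
  exact ⟨fun hz => Relation.ReflTransGen.trans h hz,
    fun hz => Relation.ReflTransGen.trans (reach_symm h) hz⟩

lemma comp_mono {S T : Set G.V} (hST : S ⊆ T) (v : G.V) : G.comp S v ⊆ G.comp T v :=
  fun _ hw =>
    Relation.ReflTransGen.lift (p := G.stepIn T) id (fun a b (hab : G.stepIn S a b) => (⟨hST hab.1, hST hab.2.1, hab.2.2⟩ : G.stepIn T a b)) _ _ hw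

lemma comp_sandwich {S T : Set G.V} {y x : G.V} (hx : x ∈ G.comp S y)
    (hsub : G.comp S y ⊆ T) (hTS : T ⊆ S) :
    G.comp T x = G.comp S y := by
  apply Set.Subset.antisymm
  · rw [← comp_eq_of_mem hx]; exact comp_mono hTS x
  · intro w hw
    have hxw : Relation.ReflTransGen (G.stepIn S) x w :=
      Relation.ReflTransGen.trans (reach_symm hx) hw
    clear hw
    induction hxw with
    | refl => exact Relation.ReflTransGen.refl
    | @tail b c hab hbc ih =>
      have hbD : b ∈ G.comp S y := Relation.ReflTransGen.trans hx hab
      have hcD : c ∈ G.comp S y := Relation.ReflTransGen.tail hbD hbc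
      exact Relation.ReflTransGen.tail ih ⟨hsub hbD, hsub hcD, hbc.2.2⟩

/-- The set of edges crossing `X`. -/
def crossE (G : FinMGraph) (X : Set G.V) : Set G.E :=
  {e | ∃ a b, G.ends e = s(a, b) ∧ a ∈ X ∧ b ∉ X}

lemma cut_eq_ncard (X : Set G.V) : G.cut X = (G.crossE X).ncard :=
  Nat.card_coe_set_eq _

lemma cut_comp_univ (v : G.V) : G.cut (G.comp Set.univ v) = 0 := by
  rw [cut_eq_ncard]
  have h : G.crossE (G.comp Set.univ v) = ∅ := by
    ext e
    simp only [crossE, Set.mem_setOf_eq, Set.mem_empty_iff_false, iff_false]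
    rintro ⟨a, b, he, ha, hb⟩
    exact hb (Relation.ReflTransGen.tail ha ⟨Set.mem_univ a, Set.mem_univ b, e, he⟩)
  rw [h, Set.ncard_empty]

lemma first_exit {α : Type*} {R : α → α → Prop} {D : Set α} {w b : α}
    (h : Relation.ReflTransGen R w b) (hw : w ∈ D) :
    b ∉ D → ∃ a c, a ∈ D ∧ c ∉ D ∧ R a c := by
  induction h with
  | refl => exact fun hb => absurd hw hb
  | @tail x y _ hxy ih =>
    intro hy
    by_cases hx : x ∈ D
    · exact ⟨x, y, hx, hy, hxy⟩
    · exact ih hx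

lemma cut_comp_le (L : Fin (Fintype.card G.V) ≃ G.V) {k : ℕ}
    (hL : ∀ i, G.cost L i ≤ k) {A : Set G.V}
    (hA : ∀ ⦃v w : G.V⦄, v ∈ A → L.symm v ≤ L.symm w → w ∈ A)
    {y : G.V} (hy : y ∈ A) : G.cut (G.comp A y) ≤ k := by
  obtain ⟨w₀, hw₀D, hmin⟩ := Set.exists_min_image (G.comp A y) (fun w => L.symm w)
      (Set.toFinite _) ⟨y, mem_comp_self _ _⟩
  have hDA : G.comp A y ⊆ A := comp_subset hy
  have htail_sub : G.tail L (L.symm w₀) ⊆ A := fun v hv => hA (hDA hw₀D) hv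
  have hDtail : G.comp A y ⊆ G.tail L (L.symm w₀) := fun v hv => hmin v hv
  have hcomp : G.comp (G.tail L (L.symm w₀)) w₀ = G.comp A y :=
    comp_sandwich hw₀D hDtail htail_sub
  have hc := hL (L.symm w₀)
  rw [FinMGraph.cost, Equiv.apply_symm_apply, hcomp] at hc
  exact hc

lemma ncard_biUnion_le_mul {α β : Type*} [Fintype β] {k : ℕ} {𝒟 : Set α} (h𝒟 : 𝒟.Finite)
    (g : α → Set β) :
    (∀ D ∈ 𝒟, (g D).ncard ≤ k) → (⋃ D ∈ 𝒟, g D).ncard ≤ 𝒟.ncard * k := by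
  refine Set.Finite.induction_on (motive := fun s _ => (∀ D ∈ s, (g D).ncard ≤ k) → (⋃ D ∈ s, g D).ncard ≤ s.ncard * k) 𝒟 h𝒟 (fun _ => by simp) ?_
  intro a s ha hs ih hg
  rw [Set.biUnion_insert]
  calc (g a ∪ ⋃ D ∈ s, g D).ncard ≤ (g a).ncard + (⋃ D ∈ s, g D).ncard :=
        Set.ncard_union_le _ _
    _ ≤ k + s.ncard * k :=
        add_le_add (hg a (Set.mem_insert _ _)) (ih fun D hD => hg D (Set.mem_insert_of_mem _ hD))
    _ ≤ (insert a s).ncard * k := by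
        rw [Set.ncard_insert_of_notMem ha hs, Nat.succ_mul]; omega

lemma cr_val : ∀ {n : ℕ} (p j : Fin n),
    ((p.cycleRange j : Fin n) : ℕ) =
      if (j : ℕ) < (p : ℕ) then (j : ℕ) + 1 else if (j : ℕ) = (p : ℕ) then 0 else (j : ℕ)
  | 0, p, _ => p.elim0
  | n + 1, p, j => by
    rcases lt_trichotomy ((j : ℕ)) ((p : ℕ)) with h | h | h
    · have hlast : j < Fin.last n := by
        rw [Fin.lt_iff_val_lt_val, Fin.val_last]
        have := p.isLt; omega
      rw [Fin.cycleRange_of_lt (Fin.lt_def.mpr h), if_pos h]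
      exact Fin.val_add_one_of_lt hlast
    · rw [Fin.cycleRange_of_eq (Fin.ext h), if_neg (by omega), if_pos h]
      rfl
    · rw [Fin.cycleRange_of_gt (Fin.lt_def.mpr h), if_neg (by omega), if_neg (by omega)]

end FinMGraph

end AuxLemmas

/-- For every biconnected graph `G` and every vertex `u` of `G`, the minimum
over layouts of `G` starting at `u` of the `δ^ec`-cost is at most `etw(G)^2 + 2·etw(G)`. -/
theorem etwFrom_le_of_biconnected (G : FinMGraph) (hG : G.Biconnected) (u : G.V) :
    G.etwFrom u ≤ G.etw ^ 2 + 2 * G.etw := by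
  classical
  have hne : {k | ∃ L : Fin (Fintype.card G.V) ≃ G.V, ∀ i, G.cost L i ≤ k}.Nonempty := by
    refine ⟨Fintype.card G.E, (Fintype.equivFin G.V).symm, fun i => ?_⟩
    rw [FinMGraph.cost, FinMGraph.cut_eq_ncard]
    calc (G.crossE _).ncard ≤ (Set.univ : Set G.E).ncard :=
          Set.ncard_le_ncard (Set.subset_univ _) (Set.toFinite _)
      _ = Fintype.card G.E := by rw [Set.ncard_univ, Nat.card_eq_fintype_card]
  obtain ⟨L, hL⟩ : ∃ L : Fin (Fintype.card G.V) ≃ G.V, ∀ i, G.cost L i ≤ G.etw :=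
    Nat.sInf_mem hne
  set k := G.etw with hk
  have hkb : k ≤ k ^ 2 + 2 * k := by nlinarith
  set p : Fin (Fintype.card G.V) := L.symm u with hp
  by_cases hp0 : (p : ℕ) = 0
  · exact Nat.sInf_le ⟨L, by rw [← hp]; exact hp0, fun i => (hL i).trans hkb⟩
  set L' : Fin (Fintype.card G.V) ≃ G.V := (p.cycleRange).symm.trans L with hL'def
  have hval : ∀ v : G.V, ((L'.symm v : Fin _) : ℕ) =
      if ((L.symm v : Fin _) : ℕ) < (p : ℕ) then ((L.symm v : Fin _) : ℕ) + 1
      else if ((L.symm v : Fin _) : ℕ) = (p : ℕ) then 0 else ((L.symm v : Fin _) : ℕ) :=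
    fun v => FinMGraph.cr_val p (L.symm v)
  have hfirst : (L'.symm u : ℕ) = 0 := by
    rw [hval u, ← hp]
    simp
  refine Nat.sInf_le ⟨L', hfirst, fun i => ?_⟩
  set j : Fin (Fintype.card G.V) := (p.cycleRange).symm i with hj
  have hji : p.cycleRange j = i := p.cycleRange.apply_symm_apply i
  have hLij : L' i = L j := rfl
  have hiv : (i : ℕ) = if (j : ℕ) < (p : ℕ) then (j : ℕ) + 1
      else if (j : ℕ) = (p : ℕ) then 0 else (j : ℕ) := by
    rw [← hji, FinMGraph.cr_val]
  have hvu : ∀ v : G.V, v = u ↔ ((L.symm v : Fin _) : ℕ) = (p : ℕ) := by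
    intro v
    constructor
    · rintro rfl; rw [← hp]
    · intro h; apply L.symm.injective; rw [← hp]; exact Fin.ext h
  rcases lt_trichotomy ((j : ℕ)) ((p : ℕ)) with hcase | hcase | hcase
  · -- MAIN CASE: j < p
    have hiv' : (i : ℕ) = (j : ℕ) + 1 := by rw [hiv, if_pos hcase]
    have htail : G.tail L' i = G.tail L j \ {u} := by
      ext v
      constructor
      · intro hvm
        have h1 : (i : ℕ) ≤ ((L'.symm v : Fin _) : ℕ) := hvm
        rw [hval v] at h1
        refine ⟨show (j : ℕ) ≤ ((L.symm v : Fin _) : ℕ) from ?_, ?_⟩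
        · split_ifs at h1 <;> omega
        · simp only [Set.mem_singleton_iff]
          rw [hvu v]
          split_ifs at h1 <;> omega
      · rintro ⟨hv1, hv2⟩
        have h1 : (j : ℕ) ≤ ((L.symm v : Fin _) : ℕ) := hv1
        have h2 : ((L.symm v : Fin _) : ℕ) ≠ (p : ℕ) := fun h =>
          (show v ≠ u by simpa using hv2) ((hvu v).mpr h)
        show (i : ℕ) ≤ ((L'.symm v : Fin _) : ℕ)
        rw [hval v]
        split_ifs <;> omega
    have hxS : L j ∈ G.tail L j := by
      show j ≤ L.symm (L j); rw [Equiv.symm_apply_apply]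
    have hxu : L j ≠ u := by
      intro h
      have h2 := (hvu (L j)).mp h
      rw [Equiv.symm_apply_apply] at h2
      omega
    have hxSu : L j ∈ G.tail L j \ {u} := ⟨hxS, by simpa using hxu⟩
    have hC'S : G.comp (G.tail L j \ {u}) (L j) ⊆ G.tail L j \ {u} :=
      FinMGraph.comp_subset hxSu
    have hC'C : G.comp (G.tail L j \ {u}) (L j) ⊆ G.comp (G.tail L j) (L j) :=
      FinMGraph.comp_mono Set.diff_subset (L j)
    have hCS : G.comp (G.tail L j) (L j) ⊆ G.tail L j := FinMGraph.comp_subset hxS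
    set T : Set G.V := {v : G.V | (p : ℕ) < ((L.symm v : Fin _) : ℕ)} with hT
    have hTtail : T ⊆ G.tail L p := fun v hv => by
      show p ≤ L.symm v
      exact Fin.le_def.mpr (le_of_lt hv)
    have huT : u ∉ T := by
      show ¬ (p : ℕ) < ((L.symm u : Fin _) : ℕ)
      rw [← hp]; omega
    have hupS : u ∈ G.tail L p := by
      show p ≤ L.symm u; rw [← hp]
    have hCusub : G.comp (G.tail L p) u ⊆ G.tail L p := FinMGraph.comp_subset hupS
    have hCucut : G.cut (G.comp (G.tail L p) u) ≤ k := by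
      have hc := hL p
      rw [FinMGraph.cost, show L p = u from by rw [hp, Equiv.apply_symm_apply]] at hc
      exact hc
    have hbi := hG.2 u
    set W : Set G.V := {w | w ∈ G.comp (G.tail L j \ {u}) (L j) ∧ w ∈ T ∧
      ∃ e : G.E, G.ends e = s(u, w)} with hW
    have hsplit : G.crossE (G.comp (G.tail L j \ {u}) (L j)) ⊆
        (G.crossE (G.comp (G.tail L j) (L j)) ∪ G.crossE (G.comp (G.tail L p) u)) ∪
          ⋃ w ∈ W, G.crossE (G.comp T w) := by
      rintro e ⟨a, b, hab, haC', hbC'⟩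
      by_cases hbC : b ∈ G.comp (G.tail L j) (L j)
      · have hbu : b = u := by
          by_contra hbu
          exact hbC' (Relation.ReflTransGen.tail haC'
            ⟨hC'S haC', ⟨hCS hbC, by simpa using hbu⟩, e, hab⟩)
        rw [hbu] at hab
        have hau : a ≠ u := fun h => (hC'S haC').2 (by simpa using h)
        have hanp : ((L.symm a : Fin _) : ℕ) ≠ (p : ℕ) := fun h => hau ((hvu a).mpr h)
        by_cases haT : a ∈ T
        · refine Or.inr (Set.mem_biUnion
            (show a ∈ W from ⟨haC', haT, e, by rw [hab, Sym2.eq_swap]⟩) ?_)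
          exact ⟨a, u, hab, FinMGraph.mem_comp_self _ _,
            fun hu => huT (FinMGraph.comp_subset haT hu)⟩
        · refine Or.inl (Or.inr ⟨u, a, by rw [hab, Sym2.eq_swap], FinMGraph.mem_comp_self _ _, ?_⟩)
          intro haCu
          have h1 : (p : ℕ) ≤ ((L.symm a : Fin _) : ℕ) := hCusub haCu
          exact haT (show (p : ℕ) < _ by omega)
      · exact Or.inl (Or.inl ⟨a, b, hab, hC'C haC', hbC⟩)
    have hTup : ∀ ⦃v w : G.V⦄, v ∈ T → L.symm v ≤ L.symm w → w ∈ T := by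
      intro v w hv hvw
      have h1 := Fin.le_def.mp hvw
      have hv' : (p : ℕ) < ((L.symm v : Fin _) : ℕ) := hv
      show (p : ℕ) < ((L.symm w : Fin _) : ℕ)
      omega
    have hcrossT : ∀ w ∈ W, (G.crossE (G.comp T w)).ncard ≤ k := by
      intro w hw
      rw [← FinMGraph.cut_eq_ncard]
      exact FinMGraph.cut_comp_le L hL hTup hw.2.1
    have hex : ∀ w ∈ W, ∃ q : G.E × G.V × G.V,
        G.ends q.1 = s(q.2.1, q.2.2) ∧ q.2.1 ∈ G.comp T w ∧
          q.2.1 ∈ G.comp (G.tail L p) u ∧ q.2.1 ∈ T ∧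
          q.2.2 ∉ T ∧ q.2.2 ∉ G.tail L p ∧ G.comp T q.2.1 = G.comp T w := by
      rintro w ⟨hwC', hwT, ew, hew⟩
      have hwu : w ≠ u := fun h => huT (h ▸ hwT)
      have hwCu : w ∈ G.comp (G.tail L p) u :=
        Relation.ReflTransGen.single ⟨hupS, hTtail hwT, ew, hew⟩
      have hDCu : G.comp T w ⊆ G.comp (G.tail L p) u := by
        have h1 := FinMGraph.comp_mono hTtail w
        rwa [FinMGraph.comp_eq_of_mem hwCu] at h1
      have hnpos : 0 < Fintype.card G.V := p.pos
      have hx0u : L ⟨0, hnpos⟩ ≠ u := by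
        intro h
        have h2 : (⟨0, hnpos⟩ : Fin (Fintype.card G.V)) = p := by
          rw [hp, ← h, Equiv.symm_apply_apply]
        exact hp0 (by rw [← h2])
      have hx0T : L ⟨0, hnpos⟩ ∉ T := by
        show ¬ (p : ℕ) < ((L.symm (L ⟨0, hnpos⟩) : Fin _) : ℕ)
        rw [Equiv.symm_apply_apply]
        exact Nat.not_lt_zero _
      have hpath := hbi w hwu (L ⟨0, hnpos⟩) hx0u
      have hx0D : L ⟨0, hnpos⟩ ∉ G.comp T w := fun h => hx0T (FinMGraph.comp_subset hwT h)
      obtain ⟨a, c, haD, hcD, hstep⟩ :=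
        FinMGraph.first_exit hpath (FinMGraph.mem_comp_self _ _) hx0D
      obtain ⟨hau', hcu', e', he'⟩ := hstep
      have haT : a ∈ T := FinMGraph.comp_subset hwT haD
      have hcT : c ∉ T := fun hcT =>
        hcD (Relation.ReflTransGen.tail haD ⟨haT, hcT, e', he'⟩)
      have hctail : c ∉ G.tail L p := by
        intro hctl
        have h1 : (p : ℕ) ≤ ((L.symm c : Fin _) : ℕ) := hctl
        have h2 : ((L.symm c : Fin _) : ℕ) ≠ (p : ℕ) := fun h =>
          (show c ≠ u from hcu') ((hvu c).mpr h)
        exact hcT (show (p : ℕ) < _ by omega)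
      exact ⟨⟨e', a, c⟩, he', haD, hDCu haD, haT, hcT, hctail,
        FinMGraph.comp_eq_of_mem haD⟩
    have hexD : ∀ D ∈ (fun w => G.comp T w) '' W, ∃ q : G.E × G.V × G.V,
        G.ends q.1 = s(q.2.1, q.2.2) ∧ q.2.1 ∈ D ∧
          q.2.1 ∈ G.comp (G.tail L p) u ∧ q.2.1 ∈ T ∧
          q.2.2 ∉ T ∧ q.2.2 ∉ G.tail L p ∧ G.comp T q.2.1 = D := by
      rintro D ⟨w, hwW, rfl⟩
      exact hex w hwW
    have hcard : ((fun w => G.comp T w) '' W).ncard ≤ k := by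
      rcases Set.eq_empty_or_nonempty ((fun w => G.comp T w) '' W) with hemp | ⟨D₀, hD₀⟩
      · rw [hemp, Set.ncard_empty]; omega
      obtain ⟨q₀, _⟩ := hexD D₀ hD₀
      set f : Set G.V → G.E := fun D => if h : ∃ q : G.E × G.V × G.V,
          G.ends q.1 = s(q.2.1, q.2.2) ∧ q.2.1 ∈ D ∧
            q.2.1 ∈ G.comp (G.tail L p) u ∧ q.2.1 ∈ T ∧
            q.2.2 ∉ T ∧ q.2.2 ∉ G.tail L p ∧ G.comp T q.2.1 = D
        then h.choose.1 else q₀.1 with hf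
      have hfspec : ∀ D ∈ (fun w => G.comp T w) '' W, ∃ a b,
          G.ends (f D) = s(a, b) ∧ a ∈ D ∧ a ∈ G.comp (G.tail L p) u ∧ a ∈ T ∧
            b ∉ T ∧ b ∉ G.tail L p ∧ G.comp T a = D := by
        intro D hD
        have h := hexD D hD
        rw [hf]
        dsimp only
        rw [dif_pos h]
        obtain ⟨h1, h2, h3, h4, h5, h6, h7⟩ := h.choose_spec
        exact ⟨h.choose.2.1, h.choose.2.2, h1, h2, h3, h4, h5, h6, h7⟩
      have hmapsto : ∀ D ∈ (fun w => G.comp T w) '' W, f D ∈ G.crossE (G.comp (G.tail L p) u) := by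
        intro D hD
        obtain ⟨a, b, h1, _, h3, _, _, h6, _⟩ := hfspec D hD
        exact ⟨a, b, h1, h3, fun hb => h6 (hCusub hb)⟩
      have hinj : Set.InjOn f ((fun w => G.comp T w) '' W) := by
        intro D1 hD1 D2 hD2 hfe
        obtain ⟨a1, b1, e1h, _, _, ha1T, hb1T, _, hcomp1⟩ := hfspec D1 hD1
        obtain ⟨a2, b2, e2h, _, _, ha2T, hb2T, _, hcomp2⟩ := hfspec D2 hD2
        rw [hfe] at e1h
        rw [e1h] at e2h
        rcases Sym2.eq_iff.mp e2h with ⟨h1, _⟩ | ⟨h1, _⟩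
        · rw [← hcomp1, ← hcomp2, h1]
        · exact absurd (h1 ▸ ha1T) hb2T
      calc ((fun w => G.comp T w) '' W).ncard ≤ (G.crossE (G.comp (G.tail L p) u)).ncard :=
            Set.ncard_le_ncard_of_injOn f hmapsto hinj (Set.toFinite _)
        _ = G.cut (G.comp (G.tail L p) u) := (FinMGraph.cut_eq_ncard _).symm
        _ ≤ k := hCucut
    have hCcut : (G.crossE (G.comp (G.tail L j) (L j))).ncard ≤ k := by
      rw [← FinMGraph.cut_eq_ncard]
      exact hL j
    have hCucut' : (G.crossE (G.comp (G.tail L p) u)).ncard ≤ k := by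
      rw [← FinMGraph.cut_eq_ncard]
      exact hCucut
    have hUb : (⋃ w ∈ W, G.crossE (G.comp T w)).ncard ≤ k * k := by
      have h1 : (⋃ w ∈ W, G.crossE (G.comp T w)) =
          ⋃ D ∈ (fun w => G.comp T w) '' W, G.crossE D := (Set.biUnion_image).symm
      rw [h1]
      calc (⋃ D ∈ (fun w => G.comp T w) '' W, G.crossE D).ncard
          ≤ ((fun w => G.comp T w) '' W).ncard * k :=
            FinMGraph.ncard_biUnion_le_mul (Set.toFinite _) _ (fun D hD => by
              obtain ⟨w, hw, rfl⟩ := hD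
              exact hcrossT w hw)
        _ ≤ k * k := Nat.mul_le_mul_right k hcard
    rw [FinMGraph.cost, htail, hLij, FinMGraph.cut_eq_ncard]
    calc (G.crossE (G.comp (G.tail L j \ {u}) (L j))).ncard
        ≤ ((G.crossE (G.comp (G.tail L j) (L j)) ∪ G.crossE (G.comp (G.tail L p) u)) ∪
            ⋃ w ∈ W, G.crossE (G.comp T w)).ncard :=
          Set.ncard_le_ncard hsplit (Set.toFinite _)
      _ ≤ (G.crossE (G.comp (G.tail L j) (L j)) ∪ G.crossE (G.comp (G.tail L p) u)).ncard +
            (⋃ w ∈ W, G.crossE (G.comp T w)).ncard := Set.ncard_union_le _ _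
      _ ≤ ((G.crossE (G.comp (G.tail L j) (L j))).ncard +
            (G.crossE (G.comp (G.tail L p) u)).ncard) +
            (⋃ w ∈ W, G.crossE (G.comp T w)).ncard :=
          Nat.add_le_add_right (Set.ncard_union_le _ _) _
      _ ≤ (k + k) + k * k := add_le_add (add_le_add hCcut hCucut') hUb
      _ ≤ k ^ 2 + 2 * k := by nlinarith
  · -- j = p : position 0
    have hiv0 : (i : ℕ) = 0 := by rw [hiv, if_neg (by omega), if_pos hcase]
    have htail : G.tail L' i = Set.univ := by
      ext v
      simp only [FinMGraph.tail, Set.mem_setOf_eq, Set.mem_univ, iff_true]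
      exact Fin.le_def.mpr (by omega)
    rw [FinMGraph.cost, htail, FinMGraph.cut_comp_univ]
    exact Nat.zero_le _
  · -- j > p : cost unchanged
    have hiv' : (i : ℕ) = (j : ℕ) := by rw [hiv, if_neg (by omega), if_neg (by omega)]
    have htail : G.tail L' i = G.tail L j := by
      ext v
      constructor
      · intro hvm
        have h1 : (i : ℕ) ≤ ((L'.symm v : Fin _) : ℕ) := hvm
        rw [hval v] at h1
        show (j : ℕ) ≤ ((L.symm v : Fin _) : ℕ)
        split_ifs at h1 <;> omega
      · intro hvm
        have h1 : (j : ℕ) ≤ ((L.symm v : Fin _) : ℕ) := hvm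
        show (i : ℕ) ≤ ((L'.symm v : Fin _) : ℕ)
        rw [hval v]
        split_ifs <;> omega
    rw [FinMGraph.cost, htail, hLij]
    exact (hL j).trans hkb
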